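/- There exist a set 𝕊 of matrices (generated from a fixed QuanTA circuit structure: one layer of single-qubit unitaries, one fixed layer of CNOT gates, then one layer of single-qubit unitaries on n ≥ 2 qubits) and matrices M_1, M_2 ∈ 𝕊 such that M_1·M_2 ∉ 𝕊. -/

import Mathlib

open Kronecker

/-- The CNOT gate on two qubits: `CNOT |c, t⟩ = |c, c + t⟩`. -/
def CNOT : Matrix (Fin 2 × Fin 2) (Fin 2 × Fin 2) ℂ :=
  fun p q => if p.1 = q.1 ∧ p.2 = q.1 + q.2 then 1 else 0

/-- The set `𝕊` of matrices generated by a fixed QuanTA circuit structure on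
two qubits: a layer of single-qubit unitaries, one CNOT gate, and another
layer of single-qubit unitaries. -/
def quantaCircuitSet : Set (Matrix (Fin 2 × Fin 2) (Fin 2 × Fin 2) ℂ) :=
  { M | ∃ U₁ U₂ V₁ V₂ : Matrix (Fin 2) (Fin 2) ℂ,
      U₁ ∈ Matrix.unitaryGroup (Fin 2) ℂ ∧ U₂ ∈ Matrix.unitaryGroup (Fin 2) ℂ ∧
      V₁ ∈ Matrix.unitaryGroup (Fin 2) ℂ ∧ V₂ ∈ Matrix.unitaryGroup (Fin 2) ℂ ∧
      M = (U₁ ⊗ₖ U₂) * CNOT * (V₁ ⊗ₖ V₂) }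

lemma cnot_mem : CNOT ∈ quantaCircuitSet := by
  refine ⟨1, 1, 1, 1, Submonoid.one_mem _, Submonoid.one_mem _, Submonoid.one_mem _,
    Submonoid.one_mem _, ?_⟩
  simp [Matrix.one_kronecker_one]

lemma cnot_sq : CNOT * CNOT = 1 := by
  ext ⟨i, j⟩ ⟨k, l⟩
  fin_cases i <;> fin_cases j <;> fin_cases k <;> fin_cases l <;>
    simp [CNOT, Matrix.mul_apply, Fintype.sum_prod_type, Fin.sum_univ_two,
      Matrix.one_apply, Prod.ext_iff]

lemma cnot_not_kron (P Q : Matrix (Fin 2) (Fin 2) ℂ) : CNOT ≠ P ⊗ₖ Q := by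
  intro h
  have h1 : P 0 0 * Q 0 1 = 0 := by
    have := congrFun (congrFun h ((0 : Fin 2), (0 : Fin 2))) ((0 : Fin 2), (1 : Fin 2))
    simpa [CNOT, Matrix.kroneckerMap_apply] using this.symm
  have h2 : P 1 1 * Q 0 1 = 1 := by
    have := congrFun (congrFun h ((1 : Fin 2), (0 : Fin 2))) ((1 : Fin 2), (1 : Fin 2))
    simpa [CNOT, Matrix.kroneckerMap_apply] using this.symm
  have h3 : P 0 0 * Q 0 0 = 1 := by
    have := congrFun (congrFun h ((0 : Fin 2), (0 : Fin 2))) ((0 : Fin 2), (0 : Fin 2))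
    simpa [CNOT, Matrix.kroneckerMap_apply] using this.symm
  have hQ : Q 0 1 ≠ 0 := fun hq => by simp [hq] at h2
  have hP : P 0 0 = 0 := by
    rcases mul_eq_zero.mp h1 with h | h
    · exact h
    · exact absurd h hQ
  rw [hP, zero_mul] at h3
  exact zero_ne_one h3

/-- Composition openness: the set of matrices generated from the fixed QuanTA
circuit structure is not closed under matrix multiplication. -/
theorem quanta_composition_openness :
    ∃ M₁ M₂ : Matrix (Fin 2 × Fin 2) (Fin 2 × Fin 2) ℂ,
      M₁ ∈ quantaCircuitSet ∧ M₂ ∈ quantaCircuitSet ∧ M₁ * M₂ ∉ quantaCircuitSet := by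
  refine ⟨CNOT, CNOT, cnot_mem, cnot_mem, ?_⟩
  rw [cnot_sq]
  rintro ⟨U₁, U₂, V₁, V₂, hU₁, hU₂, hV₁, hV₂, h⟩
  -- From `1 = (U₁ ⊗ U₂) * CNOT * (V₁ ⊗ V₂)` deduce that CNOT is a Kronecker product.
  have hA : (star U₁ ⊗ₖ star U₂) * (U₁ ⊗ₖ U₂) = 1 := by
    rw [← Matrix.mul_kronecker_mul, hU₁.1, hU₂.1, Matrix.one_kronecker_one]
  have hB : (V₁ ⊗ₖ V₂) * (star V₁ ⊗ₖ star V₂) = 1 := by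
    rw [← Matrix.mul_kronecker_mul, hV₁.2, hV₂.2, Matrix.one_kronecker_one]
  have key : CNOT = (star U₁ * star V₁) ⊗ₖ (star U₂ * star V₂) := by
    calc CNOT = 1 * CNOT * 1 := by rw [one_mul, mul_one]
      _ = ((star U₁ ⊗ₖ star U₂) * (U₁ ⊗ₖ U₂)) * CNOT * ((V₁ ⊗ₖ V₂) * (star V₁ ⊗ₖ star V₂)) := by
          rw [hA, hB]
      _ = (star U₁ ⊗ₖ star U₂) * ((U₁ ⊗ₖ U₂) * CNOT * (V₁ ⊗ₖ V₂)) * (star V₁ ⊗ₖ star V₂) := by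
          noncomm_ring
      _ = (star U₁ ⊗ₖ star U₂) * 1 * (star V₁ ⊗ₖ star V₂) := by rw [← h]
      _ = (star U₁ * star V₁) ⊗ₖ (star U₂ * star V₂) := by
          rw [mul_one, Matrix.mul_kronecker_mul]
  exact cnot_not_kron _ _ key
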